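/- The series J^FKB satisfies the translation property: for all integers a, b, c and s, one has J^FKB(a,b,c) = (−t)^s · J^FKB(a+s, b+s, c+s) in ℤ((t)). -/

import Mathlib

/-!
STATEMENT 2 (Translation property of J^FKB).  Work in ℤ((t))
(`LaurentSeries ℤ`), with `q = t²`.  The Frohman–Kania-Bartoszynska series
`J^FKB(a,b,c)` is defined exactly as in the context; it is a monomial in
`t` (a `HahnSeries.single`) times a t-adic sum of power series in `t`
(infinite t-adic sums are encoded coefficientwise, see `SeriesSum`).

The statement: for all integers `a b c s`,
`J^FKB(a,b,c) = (−t)^s · J^FKB(a+s, b+s, c+s)` in ℤ((t)), where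
`(−t)^s = (−1)^s t^s = HahnSeries.single s ((−1)^{|s|})`.
-/

noncomputable section
open PowerSeries

/-- `(q;q)_n = ∏_{j=1}^n (1 − q^j)` with `q = t²`, as a power series in `t`. -/
def qPt (n : ℕ) : PowerSeries ℤ :=
  ∏ j ∈ Finset.range n, (1 - (X : PowerSeries ℤ) ^ (2 * (j + 1)))

/-- `(q;q)_k` for an integer index `k`, with the convention `(q;q)_k = ∞` for
`k < 0` (the value `0` here, so that `Ring.inverse` of it is `0 = 1/∞`). -/
def qPtZ (k : ℤ) : PowerSeries ℤ := if 0 ≤ k then qPt k.toNat else 0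

/-- `(q;q)_∞`, the t-adic limit of `(q;q)_n`: its `d`-th coefficient is the
stable value `coeff d ((q;q)_d)`. -/
def qPtInf : PowerSeries ℤ := PowerSeries.mk fun d => coeff d (qPt d)

/-- The t-adic sum of a family of power series whose `n`-th member has t-order
`≥ n` (as is the case for all families occurring here): the `d`-th coefficient
is the (stabilized) finite sum `∑_{k ≤ d} coeff d (f k)`. -/
def SeriesSum (f : ℕ → PowerSeries ℤ) : PowerSeries ℤ :=
  PowerSeries.mk fun d => ∑ k ∈ Finset.range (d + 1), coeff d (f k)

/-- The Dimofte–Gaiotto–Gukov tetrahedron index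
`I_Δ(m,e) = Σ_{n ≥ max(0,−e)} (−1)^n t^{n(n+1) − (2n+e)m} / ((q;q)_n (q;q)_{n+e})
          ∈ ℤ((t))`.
The t-exponent of the `n`-th term is `n(n+1) − (2n+e)m = ((n−m)² + n) − (m² + em)`;
factoring out the monomial `t^{−(m²+em)}` leaves a t-adic sum of power series
in `t` (the `n`-th having t-order `(n−m)² + n ≥ n`), which is mapped to
`ℤ((t)) = LaurentSeries ℤ` by `HahnSeries.ofPowerSeries`.  The terms with
`n + e < 0` vanish, by the `1/(q;q)_{neg} = 0` convention built into `qPtZ`. -/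
def Idelta (m e : ℤ) : LaurentSeries ℤ :=
  HahnSeries.single (-(m ^ 2 + e * m)) 1 *
    HahnSeries.ofPowerSeries ℤ ℤ
      (SeriesSum fun n => (-1 : PowerSeries ℤ) ^ n *
        X ^ ((((n : ℤ) - m) ^ 2 + (n : ℤ)).toNat) *
        Ring.inverse (qPt n * qPtZ ((n : ℤ) + e)))

/-- The Frohman–Kania-Bartoszynska series
`J^FKB(a,b,c) = (q;q)_∞ · Σ_{n ≥ −min(a,b,c)} (−1)^n
   t^{n(3n+1) + 2n(a+b+c) + ab+bc+ca} / ((q;q)_{n+a} (q;q)_{n+b} (q;q)_{n+c})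
   ∈ ℤ((t))`.
Writing `μ = min(a,b,c)`, `sᵢ = a − μ, b − μ, c − μ ≥ 0`, `σ = s₁+s₂+s₃` and
`π = s₁s₂+s₂s₃+s₃s₁`, the summation index is `n = k − μ` with `k ∈ ℕ`, and the
t-exponent of the `n`-th term is
`n(3n+1) + 2n(a+b+c) + ab+bc+ca = (k(3k+1) + 2kσ) + (π − μ)`, while
`(−1)^n = (−1)^k (−1)^μ`; factoring out the monomial `(−1)^μ t^{π−μ}` leaves a
t-adic sum of power series in `t` (the `k`-th having t-order
`k(3k+1) + 2kσ ≥ k`), mapped into `ℤ((t))` by `HahnSeries.ofPowerSeries`. -/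
def Jfkb (a b c : ℤ) : LaurentSeries ℤ :=
  let μ : ℤ := min a (min b c)
  let s₁ : ℕ := (a - μ).toNat
  let s₂ : ℕ := (b - μ).toNat
  let s₃ : ℕ := (c - μ).toNat
  HahnSeries.single (((s₁ * s₂ + s₂ * s₃ + s₃ * s₁ : ℕ) : ℤ) - μ)
      ((-1 : ℤ) ^ μ.natAbs) *
    HahnSeries.ofPowerSeries ℤ ℤ
      (qPtInf * SeriesSum fun k => (-1 : PowerSeries ℤ) ^ k *
        X ^ (k * (3 * k + 1) + 2 * k * (s₁ + s₂ + s₃)) *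
        Ring.inverse (qPt (k + s₁) * qPt (k + s₂) * qPt (k + s₃)))

lemma neg_one_pow_natAbs (n : ℤ) :
    ((-1 : ℤ) ^ n.natAbs) = if Even n then 1 else -1 := by
  rcases Int.even_or_odd n with h | h
  · rw [if_pos h, Even.neg_one_pow (Int.natAbs_even.mpr h)]
  · rw [if_neg (Int.not_even_iff_odd.mpr h),
      Odd.neg_one_pow (Int.natAbs_odd.mpr h)]

lemma neg_one_pow_natAbs_add (m n : ℤ) :
    ((-1 : ℤ) ^ (m + n).natAbs) = (-1) ^ m.natAbs * (-1) ^ n.natAbs := by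
  simp only [neg_one_pow_natAbs, Int.even_add]
  rcases Int.even_or_odd m with h | h <;> rcases Int.even_or_odd n with h' | h' <;>
    simp [h, h', Int.not_even_iff_odd.mpr]

theorem stmt2 (a b c s : ℤ) :
    Jfkb a b c
      = HahnSeries.single s ((-1 : ℤ) ^ s.natAbs) * Jfkb (a + s) (b + s) (c + s) := by
  have hμ : min (a + s) (min (b + s) (c + s)) = min a (min b c) + s := by
    rw [min_add_add_right, min_add_add_right]
  simp only [Jfkb, hμ, add_sub_add_right_eq_sub]
  set μ := min a (min b c)
  set P := HahnSeries.ofPowerSeries ℤ ℤ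
      (qPtInf * SeriesSum fun k => (-1 : PowerSeries ℤ) ^ k *
        X ^ (k * (3 * k + 1) + 2 * k * ((a - μ).toNat + (b - μ).toNat + (c - μ).toNat)) *
        Ring.inverse (qPt (k + (a - μ).toNat) * qPt (k + (b - μ).toNat)
          * qPt (k + (c - μ).toNat)))
  rw [← mul_assoc, HahnSeries.single_mul_single]
  have hc : ((-1 : ℤ) ^ μ.natAbs) = (-1) ^ s.natAbs * (-1) ^ (μ + s).natAbs := by
    rw [show μ + s = s + μ from add_comm μ s, neg_one_pow_natAbs_add,
      ← mul_assoc, ← pow_add, Even.neg_one_pow ⟨s.natAbs, rfl⟩, one_mul]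
  rw [hc]
  congr 2
  ring
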